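/- For pure states σ, ρ, ρ̃ on ℂ^d and ε ∈ (0,1), with ρ_ε = (1−ε)ρ + (ε/d)I and ρ̃_ε = (1−ε)ρ̃ + (ε/d)I: D(σ‖ρ_ε) ≤ D(σ‖ρ̃_ε) if and only if Tr(σρ) ≥ Tr(σρ̃). In particular this condition is independent of ε. -/

import Mathlib

open Matrix
open scoped ComplexOrder InnerProductSpace

def IsDensity {d : ℕ} (ρ : Matrix (Fin d) (Fin d) ℂ) : Prop :=
  ρ.IsHermitian ∧ ρ.trace = 1 ∧ ρ.PosSemidef

def IsPure {d : ℕ} (ρ : Matrix (Fin d) (Fin d) ℂ) : Prop :=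
  IsDensity ρ ∧ ρ * ρ = ρ

noncomputable def matLog {d : ℕ} (A : Matrix (Fin d) (Fin d) ℂ) : Matrix (Fin d) (Fin d) ℂ :=
  if h : A.IsHermitian then
    (h.eigenvectorUnitary : Matrix (Fin d) (Fin d) ℂ) *
      Matrix.diagonal (fun i => (Real.log (h.eigenvalues i) : ℂ)) *
      (star (h.eigenvectorUnitary : Matrix (Fin d) (Fin d) ℂ))
  else 0

noncomputable def qDiv {d : ℕ} (σ ρ : Matrix (Fin d) (Fin d) ℂ) : ℝ :=
  ((σ * (matLog σ - matLog ρ)).trace).re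

noncomputable def rhoBloch (u : EuclideanSpace ℝ (Fin 3)) : Matrix (Fin 2) (Fin 2) ℂ :=
  !![(((1 + u 2) / 2 : ℝ) : ℂ), ((u 0 : ℂ) - Complex.I * (u 1 : ℂ)) / 2;
     ((u 0 : ℂ) + Complex.I * (u 1 : ℂ)) / 2, (((1 - u 2) / 2 : ℝ) : ℂ)]

noncomputable def dBpure {d : ℕ} (ρ σ : Matrix (Fin d) (Fin d) ℂ) : ℝ :=
  Real.sqrt (1 - ((ρ * σ).trace).re)

noncomputable def dFS {d : ℕ} (ρ σ : Matrix (Fin d) (Fin d) ℂ) : ℝ :=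
  Real.arccos (Real.sqrt (((ρ * σ).trace).re))

noncomputable def mixWith {d : ℕ} (ρ : Matrix (Fin d) (Fin d) ℂ) (ε : ℝ) :
    Matrix (Fin d) (Fin d) ℂ :=
  ((1 - ε : ℝ) : ℂ) • ρ + ((ε : ℂ) / (d : ℂ)) • (1 : Matrix (Fin d) (Fin d) ℂ)

lemma matLog_affine {d : ℕ} (A : Matrix (Fin d) (Fin d) ℂ) (hA : A.IsHermitian) (a b : ℝ)
    (h : ∀ i, Real.log (hA.eigenvalues i) = a + b * hA.eigenvalues i) :
    matLog A = (a : ℂ) • (1 : Matrix (Fin d) (Fin d) ℂ) + (b : ℂ) • A := by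
  have hU : (hA.eigenvectorUnitary : Matrix (Fin d) (Fin d) ℂ) *
      star (hA.eigenvectorUnitary : Matrix (Fin d) (Fin d) ℂ) = 1 :=
    (Matrix.mem_unitaryGroup_iff).mp (hA.eigenvectorUnitary).2
  have hdiag : Matrix.diagonal (fun i => (Real.log (hA.eigenvalues i) : ℂ)) =
      (a : ℂ) • (1 : Matrix (Fin d) (Fin d) ℂ) +
        (b : ℂ) • Matrix.diagonal (RCLike.ofReal ∘ hA.eigenvalues) := by
    ext i j
    rcases eq_or_ne i j with rfl | hij
    · simp only [Matrix.add_apply, Matrix.smul_apply, Matrix.diagonal_apply_eq,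
        Matrix.one_apply_eq, Function.comp_apply, h i, smul_eq_mul, mul_one]
      push_cast
      norm_num
    · simp [Matrix.diagonal_apply_ne _ hij, Matrix.one_apply_ne hij]
  rw [matLog, dif_pos hA, hdiag]
  rw [Matrix.mul_add, Matrix.add_mul, Matrix.mul_smul, Matrix.mul_smul, Matrix.smul_mul,
    Matrix.smul_mul, Matrix.mul_one, hU]
  conv_rhs => rw [hA.spectral_theorem]
  rfl

lemma eigenvalues_two {d : ℕ} (A : Matrix (Fin d) (Fin d) ℂ) (hA : A.IsHermitian) (c₁ c₂ : ℝ)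
    (hq : (A - (c₁ : ℂ) • 1) * (A - (c₂ : ℂ) • 1) = 0) (i : Fin d) :
    hA.eigenvalues i = c₁ ∨ hA.eigenvalues i = c₂ := by
  set U : Matrix (Fin d) (Fin d) ℂ := (hA.eigenvectorUnitary : Matrix (Fin d) (Fin d) ℂ)
  have hU1 : U * star U = 1 := (Matrix.mem_unitaryGroup_iff).mp (hA.eigenvectorUnitary).2
  have hU2 : star U * U = 1 := (Matrix.mem_unitaryGroup_iff').mp (hA.eigenvectorUnitary).2
  set D : Matrix (Fin d) (Fin d) ℂ := Matrix.diagonal (RCLike.ofReal ∘ hA.eigenvalues)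
  have hD : star U * A * U = D := by
    have := hA.conjStarAlgAut_star_eigenvectorUnitary
    rw [Unitary.conjStarAlgAut_star_apply] at this
    exact this
  have key : ∀ c : ℝ, star U * (A - (c : ℂ) • 1) * U = D - (c : ℂ) • 1 := by
    intro c
    rw [Matrix.mul_sub, Matrix.sub_mul, hD, Matrix.mul_smul, Matrix.smul_mul, Matrix.mul_one, hU2]
  have hzero : (D - (c₁ : ℂ) • 1) * (D - (c₂ : ℂ) • 1) = 0 := by
    rw [← key c₁, ← key c₂]
    calc star U * (A - (c₁ : ℂ) • 1) * U * (star U * (A - (c₂ : ℂ) • 1) * U)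
        = star U * ((A - (c₁ : ℂ) • 1) * ((U * star U) * ((A - (c₂ : ℂ) • 1) * U))) := by
          simp only [Matrix.mul_assoc]
      _ = 0 := by
          rw [hU1, Matrix.one_mul, ← Matrix.mul_assoc (A - (c₁ : ℂ) • 1), hq]
          simp
  have hent := congrFun (congrFun hzero i) i
  have : ((hA.eigenvalues i : ℂ) - c₁) * ((hA.eigenvalues i : ℂ) - c₂) = 0 := by
    rw [Matrix.mul_apply, Finset.sum_eq_single i] at hent
    · simpa [D, Matrix.sub_apply, Matrix.smul_apply, Function.comp] using hent
    · intro b _ hb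
      simp [D, Matrix.sub_apply, Matrix.smul_apply, Matrix.diagonal_apply_ne,
        Matrix.one_apply_ne, Ne.symm hb, hb]
    · intro hcon
      exact absurd (Finset.mem_univ i) hcon
  rcases mul_eq_zero.mp this with h | h
  · left; exact_mod_cast sub_eq_zero.mp h
  · right; exact_mod_cast sub_eq_zero.mp h

noncomputable def logB (d : ℕ) (ε : ℝ) : ℝ :=
  (Real.log (1 - ε + ε / d) - Real.log (ε / d)) / (1 - ε)

noncomputable def logA (d : ℕ) (ε : ℝ) : ℝ := Real.log (ε / d) - logB d ε * (ε / d)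

lemma mix_herm {d : ℕ} (ρ : Matrix (Fin d) (Fin d) ℂ) (hρ : ρ.IsHermitian) (ε : ℝ) :
    (mixWith ρ ε).IsHermitian := by
  unfold mixWith
  apply Matrix.IsHermitian.add
  · rw [Matrix.IsHermitian, Matrix.conjTranspose_smul, hρ]
    congr 1
    simp
  · rw [Matrix.IsHermitian, Matrix.conjTranspose_smul, Matrix.conjTranspose_one]
    congr 1
    simp [star_div₀, ← Complex.ofReal_natCast]

lemma mix_quad {d : ℕ} (ρ : Matrix (Fin d) (Fin d) ℂ) (hρ : ρ * ρ = ρ) (ε : ℝ) :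
    (mixWith ρ ε - ((ε / d : ℝ) : ℂ) • 1) *
      (mixWith ρ ε - ((1 - ε + ε / d : ℝ) : ℂ) • 1) = 0 := by
  have h1 : mixWith ρ ε - ((ε / d : ℝ) : ℂ) • 1 = ((1 - ε : ℝ) : ℂ) • ρ := by
    unfold mixWith
    push_cast
    module
  have h2 : mixWith ρ ε - ((1 - ε + ε / d : ℝ) : ℂ) • 1 =
      ((1 - ε : ℝ) : ℂ) • (ρ - 1) := by
    unfold mixWith
    push_cast
    module
  rw [h1, h2, smul_mul_smul_comm, Matrix.mul_sub, Matrix.mul_one, hρ, sub_self, smul_zero]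

lemma matLog_mix {d : ℕ} (hd : 0 < d) (ρ : Matrix (Fin d) (Fin d) ℂ) (hρ : IsPure ρ)
    (ε : ℝ) (hε0 : 0 < ε) (hε1 : ε < 1) :
    matLog (mixWith ρ ε) = ((logA d ε : ℝ) : ℂ) • (1 : Matrix (Fin d) (Fin d) ℂ) +
      ((logB d ε : ℝ) : ℂ) • mixWith ρ ε := by
  have hH := mix_herm ρ hρ.1.1 ε
  have hquad := mix_quad ρ hρ.2 ε
  have hdpos : (0 : ℝ) < (d : ℝ) := by exact_mod_cast hd
  have hc1pos : (0 : ℝ) < ε / d := div_pos hε0 hdpos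
  have hne : (1 : ℝ) - ε ≠ 0 := by linarith
  apply matLog_affine _ hH
  intro i
  rcases eigenvalues_two _ hH _ _ hquad i with h | h <;> rw [h]
  · simp [logA]
  · rw [logA]
    have hB : logB d ε * (1 - ε) = Real.log (1 - ε + ε / d) - Real.log (ε / d) := by
      unfold logB
      field_simp
    linear_combination -hB

lemma qDiv_mix {d : ℕ} (hd : 0 < d) (σ ρ : Matrix (Fin d) (Fin d) ℂ)
    (hσtr : σ.trace = 1) (hρ : IsPure ρ) (ε : ℝ) (hε0 : 0 < ε) (hε1 : ε < 1) :
    qDiv σ (mixWith ρ ε) = ((σ * matLog σ).trace).re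
      - (logA d ε + logB d ε * (ε / d))
      - logB d ε * (1 - ε) * ((σ * ρ).trace).re := by
  unfold qDiv
  rw [matLog_mix hd ρ hρ ε hε0 hε1]
  have htr : (σ * (matLog σ -
        (((logA d ε : ℝ) : ℂ) • 1 + ((logB d ε : ℝ) : ℂ) • mixWith ρ ε))).trace
      = (σ * matLog σ).trace - (((logA d ε + logB d ε * (ε / d) : ℝ) : ℂ)
        + ((logB d ε * (1 - ε) : ℝ) : ℂ) * (σ * ρ).trace) := by
    unfold mixWith
    simp only [Matrix.mul_sub, Matrix.mul_add, Matrix.mul_smul, Matrix.mul_one,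
      Matrix.trace_sub, Matrix.trace_add, Matrix.trace_smul, hσtr, smul_eq_mul]
    push_cast
    ring
  rw [htr]
  simp only [Complex.sub_re, Complex.add_re, Complex.ofReal_re, Complex.mul_re,
    Complex.ofReal_im]
  ring

theorem stmt16 {d : ℕ} (hd : 0 < d) (σ ρ ρ' : Matrix (Fin d) (Fin d) ℂ)
    (hσ : IsPure σ) (hρ : IsPure ρ) (hρ' : IsPure ρ')
    (ε : ℝ) (hε0 : 0 < ε) (hε1 : ε < 1) :
    qDiv σ (mixWith ρ ε) ≤ qDiv σ (mixWith ρ' ε) ↔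
      ((σ * ρ).trace).re ≥ ((σ * ρ').trace).re := by
  have hdpos : (0 : ℝ) < (d : ℝ) := by exact_mod_cast hd
  have hc1pos : (0 : ℝ) < ε / d := div_pos hε0 hdpos
  have hεlt : (0 : ℝ) < 1 - ε := by linarith
  have hb : 0 < logB d ε := by
    apply div_pos _ hεlt
    have : Real.log (ε / d) < Real.log (1 - ε + ε / d) :=
      Real.log_lt_log hc1pos (by linarith)
    linarith
  have ht : 0 < logB d ε * (1 - ε) := mul_pos hb hεlt
  rw [qDiv_mix hd σ ρ hσ.1.2.1 hρ ε hε0 hε1, qDiv_mix hd σ ρ' hσ.1.2.1 hρ' ε hε0 hε1]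
  set x := ((σ * ρ).trace).re
  set y := ((σ * ρ').trace).re
  set t := logB d ε * (1 - ε)
  constructor
  · intro h
    have h2 : t * y ≤ t * x := by linarith
    exact le_of_mul_le_mul_left h2 ht
  · intro h
    have := mul_le_mul_of_nonneg_left h ht.le
    linarith
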